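/- The probability that the identity permutation is weakly stable equals ∫_{([0,1]^{k₁})^n} ∫_{([0,1]^{k₂})^n} ∏_{1 ≤ i ≠ j ≤ n} (1 − ∏_{u∈[k₁]} x_{i,u} · ∏_{v∈[k₂]} y_{j,v}) dy dx, and consequently E[S_{n,w}] = n! times this integral. -/

import Mathlib

open MeasureTheory Set

noncomputable section

/-- Strict vector order: every coordinate strictly smaller. -/
def vlt {k : ℕ} (u v : Fin k → ℝ) : Prop := ∀ t, u t < v t

/-- Sample space: the `2n²` preference vectors `X_i^{(j)} = ω.1 i j ∈ [0,1]^{k₁}` and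
`Y_j^{(i)} = ω.2 j i ∈ [0,1]^{k₂}`. -/
abbrev PrefSpace (n k₁ k₂ : ℕ) :=
  (Fin n → Fin n → Fin k₁ → ℝ) × (Fin n → Fin n → Fin k₂ → ℝ)

/-- Uniform probability measure on the cube `[0,1]^k`. -/
def cubeMeasure (k : ℕ) : Measure (Fin k → ℝ) :=
  Measure.pi fun _ => volume.restrict (Icc (0:ℝ) 1)

/-- The distribution of the whole family: all `2n²` vectors independent,
uniform on their respective cubes. -/
def prefMeasure (n k₁ k₂ : ℕ) : Measure (PrefSpace n k₁ k₂) :=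
  (Measure.pi fun _ : Fin n => Measure.pi fun _ : Fin n => cubeMeasure k₁).prod
    (Measure.pi fun _ : Fin n => Measure.pi fun _ : Fin n => cubeMeasure k₂)

/-- The pair `(i,j)` w-blocks `σ`. -/
def wBlocks {n k₁ k₂ : ℕ} (ω : PrefSpace n k₁ k₂) (σ : Equiv.Perm (Fin n))
    (i j : Fin n) : Prop :=
  vlt (ω.1 i j) (ω.1 i (σ i)) ∧ vlt (ω.2 j i) (ω.2 j (σ⁻¹ j))

/-- The pair `(i,j)` s-blocks `σ`. -/
def sBlocks {n k₁ k₂ : ℕ} (ω : PrefSpace n k₁ k₂) (σ : Equiv.Perm (Fin n))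
    (i j : Fin n) : Prop :=
  (vlt (ω.1 i j) (ω.1 i (σ i)) ∧ ¬ vlt (ω.2 j (σ⁻¹ j)) (ω.2 j i)) ∨
  (¬ vlt (ω.1 i (σ i)) (ω.1 i j) ∧ vlt (ω.2 j i) (ω.2 j (σ⁻¹ j)))

/-- The pair `(i,j)` sup-blocks `σ`. -/
def supBlocks {n k₁ k₂ : ℕ} (ω : PrefSpace n k₁ k₂) (σ : Equiv.Perm (Fin n))
    (i j : Fin n) : Prop :=
  ¬ vlt (ω.1 i (σ i)) (ω.1 i j) ∧ ¬ vlt (ω.2 j (σ⁻¹ j)) (ω.2 j i)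

/-- `σ` is weakly stable. -/
def weaklyStable {n k₁ k₂ : ℕ} (ω : PrefSpace n k₁ k₂) (σ : Equiv.Perm (Fin n)) : Prop :=
  ∀ i j, j ≠ σ i → ¬ wBlocks ω σ i j

/-- `σ` is strongly stable. -/
def stronglyStable {n k₁ k₂ : ℕ} (ω : PrefSpace n k₁ k₂) (σ : Equiv.Perm (Fin n)) : Prop :=
  ∀ i j, j ≠ σ i → ¬ sBlocks ω σ i j

/-- `σ` is super-stable. -/
def superStable {n k₁ k₂ : ℕ} (ω : PrefSpace n k₁ k₂) (σ : Equiv.Perm (Fin n)) : Prop :=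
  ∀ i j, j ≠ σ i → ¬ supBlocks ω σ i j

/-- Number of weakly stable permutations. -/
def Sw (n k₁ k₂ : ℕ) (ω : PrefSpace n k₁ k₂) : ℕ :=
  Nat.card {σ : Equiv.Perm (Fin n) // weaklyStable ω σ}

/-- Number of strongly stable permutations. -/
def Ss (n k₁ k₂ : ℕ) (ω : PrefSpace n k₁ k₂) : ℕ :=
  Nat.card {σ : Equiv.Perm (Fin n) // stronglyStable ω σ}

/-- Number of super-stable permutations. -/
def Ssup (n k₁ k₂ : ℕ) (ω : PrefSpace n k₁ k₂) : ℕ :=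
  Nat.card {σ : Equiv.Perm (Fin n) // superStable ω σ}

/-- Expected number of weakly stable permutations. -/
def ESw (n k₁ k₂ : ℕ) : ℝ := ∫ ω, (Sw n k₁ k₂ ω : ℝ) ∂ prefMeasure n k₁ k₂

/-- Expected number of strongly stable permutations. -/
def ESs (n k₁ k₂ : ℕ) : ℝ := ∫ ω, (Ss n k₁ k₂ ω : ℝ) ∂ prefMeasure n k₁ k₂

/-- Expected number of super-stable permutations. -/
def ESsup (n k₁ k₂ : ℕ) : ℝ := ∫ ω, (Ssup n k₁ k₂ ω : ℝ) ∂ prefMeasure n k₁ k₂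


/-! ### Auxiliary lemmas -/

open ENNReal

instance vol01_prob : IsProbabilityMeasure (volume.restrict (Icc (0:ℝ) 1)) :=
  ⟨by simp [Real.volume_Icc]⟩

instance cube_prob (k : ℕ) : IsProbabilityMeasure (cubeMeasure k) := by
  unfold cubeMeasure; infer_instance

instance prefMeasure_prob (n k₁ k₂ : ℕ) : IsProbabilityMeasure (prefMeasure n k₁ k₂) := by
  unfold prefMeasure
  exact Measure.prod.instIsProbabilityMeasure _ _

theorem lintegral_pi_prod_fin {m : ℕ} {E : Fin m → Type*} [∀ i, MeasurableSpace (E i)]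
    (μ : ∀ i, Measure (E i)) [∀ i, SigmaFinite (μ i)]
    (f : ∀ i, E i → ℝ≥0∞) (hf : ∀ i, Measurable (f i)) :
    ∫⁻ x, ∏ i, f i (x i) ∂Measure.pi μ = ∏ i, ∫⁻ a, f i a ∂μ i := by
  induction m with
  | zero => simp [Measure.pi_univ]
  | succ m ih =>
    calc ∫⁻ x, ∏ i, f i (x i) ∂Measure.pi μ
        = ∫⁻ x, (f 0 x.1 * ∏ i : Fin m, f (Fin.succAbove 0 i) (x.2 i))
            ∂((μ 0).prod (Measure.pi fun i : Fin m => μ (Fin.succAbove 0 i))) := by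
          rw [← ((measurePreserving_piFinSuccAbove μ 0).symm).lintegral_comp_emb
            (MeasurableEquiv.measurableEmbedding _)]
          refine lintegral_congr fun x => ?_
          rw [Fin.prod_univ_succ]
          simp only [MeasurableEquiv.piFinSuccAbove_symm_apply, Fin.insertNthEquiv,
            Equiv.coe_fn_mk, Fin.insertNth_apply_same, ← Fin.zero_succAbove,
            Fin.insertNth_apply_succAbove]
      _ = (∫⁻ a, f 0 a ∂μ 0) * ∏ i : Fin m, ∫⁻ a, f (Fin.succAbove 0 i) a ∂μ (Fin.succAbove 0 i) := by
          rw [lintegral_prod_mul (f := f 0)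
            (g := fun r : (i : Fin m) → E (Fin.succAbove 0 i) =>
              ∏ i : Fin m, f (Fin.succAbove 0 i) (r i))
            (hf 0).aemeasurable
            (Finset.measurable_prod _ fun i _ => (hf _).comp (measurable_pi_apply i)).aemeasurable]
          rw [ih (fun i => μ (Fin.succAbove 0 i)) (fun i => f (Fin.succAbove 0 i)) (fun i => hf _)]
      _ = ∏ i, ∫⁻ a, f i a ∂μ i := by
          rw [Fin.prod_univ_succ]
          congr 1

theorem lintegral_pi_prod {ι : Type*} [Fintype ι] {E : ι → Type*} [∀ i, MeasurableSpace (E i)]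
    (μ : ∀ i, Measure (E i)) [∀ i, SigmaFinite (μ i)]
    (f : ∀ i, E i → ℝ≥0∞) (hf : ∀ i, Measurable (f i)) :
    ∫⁻ x, ∏ i, f i (x i) ∂Measure.pi μ = ∏ i, ∫⁻ a, f i a ∂μ i := by
  let e := (Fintype.equivFin ι).symm
  have h1 : ∫⁻ x, ∏ i, f i (x i) ∂Measure.pi μ
      = ∫⁻ a, ∏ b, f (e b) (a b) ∂Measure.pi fun b => μ (e b) := by
    rw [← (measurePreserving_piCongrLeft μ e).lintegral_comp_emb
      (MeasurableEquiv.measurableEmbedding _)]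
    refine lintegral_congr fun a => ?_
    rw [← e.prod_comp]
    refine Finset.prod_congr rfl fun b _ => ?_
    rw [MeasurableEquiv.coe_piCongrLeft, Equiv.piCongrLeft_apply_apply]
  rw [h1, lintegral_pi_prod_fin _ _ (fun b => hf _), ← e.prod_comp]

theorem pi_eq_map_prod {ι : Type*} [Fintype ι] [DecidableEq ι] {C : Type*} [MeasurableSpace C]
    (μ : Measure C) [SigmaFinite μ] (j : ι) :
    Measure.pi (fun _ : ι => μ)
      = Measure.map
          (fun p : C × ({i : ι // ¬ i = j} → C) => fun i => if h : i = j then p.1 else p.2 ⟨i, h⟩)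
          (μ.prod (Measure.pi fun _ : {i : ι // ¬ i = j} => μ)) := by
  have hmap : Measurable
      (fun p : C × ({i : ι // ¬ i = j} → C) => fun i => if h : i = j then p.1 else p.2 ⟨i, h⟩) := by
    apply measurable_pi_lambda
    intro i
    by_cases h : i = j
    · simp only [dif_pos h]; exact measurable_fst
    · simp only [dif_neg h]; exact (measurable_pi_apply _).comp measurable_snd
  refine Measure.pi_eq fun s hs => ?_
  rw [Measure.map_apply hmap (MeasurableSet.univ_pi hs)]
  have hpre : (fun p : C × ({i : ι // ¬ i = j} → C) =>
        fun i => if h : i = j then p.1 else p.2 ⟨i, h⟩) ⁻¹' (Set.pi Set.univ s)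
      = s j ×ˢ Set.pi Set.univ (fun i' : {i // ¬ i = j} => s i') := by
    ext p
    simp only [Set.mem_preimage, Set.mem_pi, Set.mem_univ, forall_true_left, Set.mem_prod]
    constructor
    · intro h
      refine ⟨by simpa using h j, fun i' => by simpa [dif_neg i'.2] using h i'⟩
    · intro h i
      by_cases hij : i = j
      · subst hij; simpa using h.1
      · simpa [dif_neg hij] using h.2 ⟨i, hij⟩
  rw [hpre, Measure.prod_prod, Measure.pi_pi,
    ← Finset.mul_prod_erase Finset.univ (fun i => μ (s i)) (Finset.mem_univ j)]
  congr 1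
  exact (Finset.prod_subtype (Finset.univ.erase j) (p := fun i => ¬ i = j)
    (fun i => by simp [Finset.mem_erase]) (fun i => μ (s i))).symm

theorem lintegral_pi_split {ι : Type*} [Fintype ι] [DecidableEq ι] {C : Type*} [MeasurableSpace C]
    (μ : Measure C) [SigmaFinite μ] (j : ι) (f : (ι → C) → ℝ≥0∞) (hf : Measurable f) :
    ∫⁻ x, f x ∂Measure.pi (fun _ : ι => μ)
      = ∫⁻ e, ∫⁻ r, f (fun i => if h : i = j then e else r ⟨i, h⟩)
          ∂Measure.pi (fun _ : {i // ¬ i = j} => μ) ∂μ := by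
  have hmap : Measurable
      (fun p : C × ({i : ι // ¬ i = j} → C) => fun i => if h : i = j then p.1 else p.2 ⟨i, h⟩) := by
    apply measurable_pi_lambda
    intro i
    by_cases h : i = j
    · simp only [dif_pos h]; exact measurable_fst
    · simp only [dif_neg h]; exact (measurable_pi_apply _).comp measurable_snd
  have h2 : Measurable fun a : C × ({i : ι // ¬ i = j} → C) =>
      f (fun i => if h : i = j then a.1 else a.2 ⟨i, h⟩) := hf.comp hmap
  rw [pi_eq_map_prod μ j, lintegral_map hf hmap, lintegral_prod _ h2.aemeasurable]

theorem lintegral_pi_pivot {ι : Type*} [Fintype ι] [DecidableEq ι] {C : Type*} [MeasurableSpace C]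
    (μ : Measure C) [IsProbabilityMeasure μ] (j : ι) (g : ι → C → C → ℝ≥0∞)
    (hg : ∀ i, Measurable (Function.uncurry (g i))) :
    ∫⁻ r, ∏ i ∈ Finset.univ.erase j, g i (r i) (r j) ∂Measure.pi (fun _ : ι => μ)
      = ∫⁻ e, ∏ i ∈ Finset.univ.erase j, ∫⁻ c, g i c e ∂μ ∂μ := by
  have hmes : Measurable fun x : ι → C => ∏ i ∈ Finset.univ.erase j, g i (x i) (x j) := by
    apply Finset.measurable_prod
    intro i _
    have : (fun x : ι → C => g i (x i) (x j))
        = (Function.uncurry (g i)) ∘ (fun x => (x i, x j)) := rfl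
    rw [this]
    exact (hg i).comp ((measurable_pi_apply i).prodMk (measurable_pi_apply j))
  rw [lintegral_pi_split μ j _ hmes]
  refine lintegral_congr fun e => ?_
  have key : ∀ r : {i // ¬ i = j} → C,
      ∏ i ∈ Finset.univ.erase j, g i (if h : i = j then e else r ⟨i, h⟩)
          (if h : (j : ι) = j then e else r ⟨j, h⟩)
        = ∏ i' : {i // ¬ i = j}, g i' (r i') e := by
    intro r
    rw [Finset.prod_subtype (Finset.univ.erase j) (p := fun i => ¬ i = j)
      (fun i => by simp [Finset.mem_erase])]
    refine Finset.prod_congr rfl fun i' _ => ?_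
    rw [dif_neg i'.2, dif_pos rfl]
  calc ∫⁻ r, ∏ i ∈ Finset.univ.erase j, g i (if h : i = j then e else r ⟨i, h⟩)
          (if h : (j : ι) = j then e else r ⟨j, h⟩) ∂Measure.pi (fun _ : {i // ¬ i = j} => μ)
      = ∫⁻ r, ∏ i' : {i // ¬ i = j}, g i' (r i') e ∂Measure.pi (fun _ : {i // ¬ i = j} => μ) :=
        lintegral_congr fun r => key r
    _ = ∏ i' : {i // ¬ i = j}, ∫⁻ c, g i' c e ∂μ := by
        refine lintegral_pi_prod (ι := {i // ¬ i = j}) (fun _ => μ) (fun i' c => g i' c e)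
          fun i' => ?_
        show Measurable fun c : C => g (↑i') c e
        exact (hg i').comp (measurable_id.prodMk measurable_const)
    _ = ∏ i ∈ Finset.univ.erase j, ∫⁻ c, g i c e ∂μ :=
        (Finset.prod_subtype (Finset.univ.erase j) (p := fun i => ¬ i = j)
          (fun i => by simp [Finset.mem_erase]) (fun i => ∫⁻ c, g i c e ∂μ)).symm

theorem ae_mem_of_measure_eq_one {α : Type*} [MeasurableSpace α] {μ : Measure α}
    [IsProbabilityMeasure μ] {s : Set α} (hs : MeasurableSet s) (h : μ s = 1) :
    ∀ᵐ a ∂μ, a ∈ s := by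
  rw [ae_iff]
  have h2 := measure_compl hs (measure_ne_top μ s)
  rw [h, measure_univ, tsub_self] at h2
  exact h2

theorem vlt_measurableSet {k : ℕ} (e : Fin k → ℝ) : MeasurableSet {c : Fin k → ℝ | vlt c e} := by
  have : {c : Fin k → ℝ | vlt c e} = Set.pi Set.univ fun v => Iio (e v) := by
    ext c
    simp only [Set.mem_setOf_eq, Set.mem_pi, Set.mem_univ, true_implies, Set.mem_Iio]
    rfl
  rw [this]
  exact MeasurableSet.univ_pi fun v => measurableSet_Iio

theorem vlt_measurableSet_pair {k : ℕ} :
    MeasurableSet {p : (Fin k → ℝ) × (Fin k → ℝ) | vlt p.1 p.2} := by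
  have : {p : (Fin k → ℝ) × (Fin k → ℝ) | vlt p.1 p.2}
      = ⋂ t, {p : (Fin k → ℝ) × (Fin k → ℝ) | p.1 t < p.2 t} := by
    ext p
    simp only [Set.mem_setOf_eq, Set.mem_iInter]
    rfl
  rw [this]
  exact MeasurableSet.iInter fun t =>
    measurableSet_lt (measurable_fst.eval) (measurable_snd.eval)

theorem cube_vlt {k : ℕ} (e : Fin k → ℝ) (he : ∀ v, e v ∈ Icc (0:ℝ) 1) :
    cubeMeasure k {c | vlt c e} = ∏ v, ENNReal.ofReal (e v) := by
  have h1 : {c : Fin k → ℝ | vlt c e} = Set.pi Set.univ fun v => Iio (e v) := by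
    ext c
    simp only [Set.mem_setOf_eq, Set.mem_pi, Set.mem_univ, true_implies, Set.mem_Iio]
    rfl
  rw [cubeMeasure, h1, Measure.pi_pi]
  refine Finset.prod_congr rfl fun v _ => ?_
  rw [Measure.restrict_apply measurableSet_Iio]
  have h2 : Iio (e v) ∩ Icc (0:ℝ) 1 = Ico 0 (e v) := by
    ext z
    constructor
    · rintro ⟨hx1, hx2, _⟩; exact ⟨hx2, hx1⟩
    · rintro ⟨hx1, hx2⟩; exact ⟨hx2, hx1, (le_of_lt hx2).trans (he v).2⟩
  rw [h2, Real.volume_Ico, sub_zero]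

theorem cube_mem_measurableSet (k : ℕ) :
    MeasurableSet {e : Fin k → ℝ | ∀ v, e v ∈ Icc (0:ℝ) 1} := by
  have h1 : {e : Fin k → ℝ | ∀ v, e v ∈ Icc (0:ℝ) 1}
      = Set.pi Set.univ fun _ => Icc (0:ℝ) 1 := by
    ext e
    simp only [Set.mem_setOf_eq, Set.mem_pi, Set.mem_univ, true_implies]
  rw [h1]
  exact MeasurableSet.univ_pi fun _ => measurableSet_Icc

theorem cube_full (k : ℕ) : cubeMeasure k {e : Fin k → ℝ | ∀ v, e v ∈ Icc (0:ℝ) 1} = 1 := by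
  have h1 : {e : Fin k → ℝ | ∀ v, e v ∈ Icc (0:ℝ) 1}
      = Set.pi Set.univ fun _ => Icc (0:ℝ) 1 := by
    ext e
    simp only [Set.mem_setOf_eq, Set.mem_pi, Set.mem_univ, true_implies]
  rw [h1, cubeMeasure, Measure.pi_pi]
  simp [Measure.restrict_apply_self, Real.volume_Icc]

theorem cube_ae_mem (k : ℕ) : ∀ᵐ e ∂cubeMeasure k, ∀ v, e v ∈ Icc (0:ℝ) 1 :=
  ae_mem_of_measure_eq_one (cube_mem_measurableSet k) (cube_full k)

theorem pi_cube_ae_mem (n k : ℕ) :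
    ∀ᵐ x ∂Measure.pi (fun _ : Fin n => cubeMeasure k), ∀ i, ∀ v, x i v ∈ Icc (0:ℝ) 1 := by
  have h1 : {x : Fin n → Fin k → ℝ | ∀ i v, x i v ∈ Icc (0:ℝ) 1}
      = Set.pi Set.univ fun _ => {e : Fin k → ℝ | ∀ v, e v ∈ Icc (0:ℝ) 1} := by
    ext x
    simp only [Set.mem_setOf_eq, Set.mem_pi, Set.mem_univ, true_implies]
  have hm : MeasurableSet {x : Fin n → Fin k → ℝ | ∀ i v, x i v ∈ Icc (0:ℝ) 1} := by
    rw [h1]; exact MeasurableSet.univ_pi fun _ => cube_mem_measurableSet k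
  refine ae_mem_of_measure_eq_one hm ?_
  show (Measure.pi fun _ : Fin n => cubeMeasure k)
    {x : Fin n → Fin k → ℝ | ∀ i v, x i v ∈ Icc (0:ℝ) 1} = 1
  rw [h1, Measure.pi_pi]
  rw [Finset.prod_const, cube_full k, one_pow]

open Classical in
def indE (P : Prop) : ℝ≥0∞ := if P then 1 else 0

theorem indE_le_one (P : Prop) : indE P ≤ 1 := by
  unfold indE; split <;> simp

theorem indE_congr {P Q : Prop} (h : P ↔ Q) : indE P = indE Q := by
  unfold indE; by_cases hp : P
  · rw [if_pos hp, if_pos (h.mp hp)]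
  · rw [if_neg hp, if_neg (fun hq => hp (h.mpr hq))]

theorem indE_true {P : Prop} (h : P) : indE P = 1 := by
  unfold indE; rw [if_pos h]

theorem indE_false {P : Prop} (h : ¬ P) : indE P = 0 := by
  unfold indE; rw [if_neg h]

theorem indE_not (P : Prop) : indE (¬ P) = 1 - indE P := by
  by_cases hp : P <;> simp [indE, hp]

theorem indE_and (P Q : Prop) : indE (P ∧ Q) = indE P * indE Q := by
  unfold indE
  by_cases hp : P <;> by_cases hq : Q <;> simp [hp, hq]

theorem prod_indE {β : Type*} (s : Finset β) (P : β → Prop) :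
    ∏ b ∈ s, indE (P b) = indE (∀ b ∈ s, P b) := by
  classical
  induction s using Finset.induction_on with
  | empty => simp [indE]
  | insert _ _ hx ih =>
    rename_i a s
    rw [Finset.prod_insert hx, ih, ← indE_and]
    exact indE_congr (by simp [Finset.forall_mem_insert])

theorem measurable_indE_vlt {k : ℕ} {α : Type*} [MeasurableSpace α]
    {f g : α → Fin k → ℝ} (hf : Measurable f) (hg : Measurable g) :
    Measurable fun a => indE (vlt (f a) (g a)) := by
  have hrw : (fun a => indE (vlt (f a) (g a)))
      = (fun p : (Fin k → ℝ) × (Fin k → ℝ) =>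
          Set.indicator {p : (Fin k → ℝ) × (Fin k → ℝ) | vlt p.1 p.2}
            (fun _ => (1:ℝ≥0∞)) p) ∘ fun a => (f a, g a) := by
    funext a
    by_cases h : vlt (f a) (g a) <;>
      simp [indE, h, Set.indicator_apply, Function.comp]
  rw [hrw]
  exact (measurable_const.indicator vlt_measurableSet_pair).comp (hf.prodMk hg)

def QQ {k : ℕ} (e : Fin k → ℝ) : ℝ≥0∞ := ∏ v, ENNReal.ofReal (e v)

theorem measurable_QQ {k : ℕ} : Measurable fun e : Fin k → ℝ => QQ e := by
  unfold QQ
  exact Finset.measurable_prod _ fun v _ =>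
    ENNReal.measurable_ofReal.comp (measurable_pi_apply v)

theorem QQ_le_one {k : ℕ} {e : Fin k → ℝ} (he : ∀ v, e v ∈ Icc (0:ℝ) 1) : QQ e ≤ 1 :=
  Finset.prod_le_one (fun v _ => zero_le)
    (fun v _ => ENNReal.ofReal_le_one.mpr (he v).2)

theorem factor_lintegral {k : ℕ} (b : ℝ≥0∞) (hb : b ≤ 1) (e : Fin k → ℝ)
    (he : ∀ v, e v ∈ Icc (0:ℝ) 1) :
    ∫⁻ c, (1 - b * indE (vlt c e)) ∂cubeMeasure k = 1 - b * QQ e := by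
  have hindm : Measurable fun c : Fin k → ℝ => indE (vlt c e) :=
    measurable_indE_vlt measurable_id measurable_const
  have hfm : Measurable fun c : Fin k → ℝ => b * indE (vlt c e) :=
    measurable_const.mul hindm
  have hle : ∀ c, b * indE (vlt c e) ≤ 1 := fun c =>
    le_trans (mul_le_mul' hb (indE_le_one _)) (by simp)
  have hfin : ∫⁻ c, b * indE (vlt c e) ∂cubeMeasure k ≠ ∞ := by
    refine ne_of_lt (lt_of_le_of_lt (lintegral_mono fun c => hle c) ?_)
    simp [lintegral_one]
  rw [lintegral_sub hfm hfin (Filter.Eventually.of_forall fun c => hle c)]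
  rw [lintegral_one, measure_univ, lintegral_const_mul b hindm]
  congr 1
  have hrw : (fun c : Fin k → ℝ => indE (vlt c e))
      = Set.indicator {c : Fin k → ℝ | vlt c e} (fun _ => (1:ℝ≥0∞)) := by
    funext c
    by_cases h : vlt c e <;> simp [indE, h, Set.indicator_apply]
  calc b * ∫⁻ c, indE (vlt c e) ∂cubeMeasure k
      = b * cubeMeasure k {c | vlt c e} := by
        rw [hrw]
        congr 1
        have := lintegral_indicator_one (μ := cubeMeasure k) (vlt_measurableSet e)
        exact this
    _ = b * QQ e := by rw [cube_vlt e he]; rfl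

theorem factor_lintegral' {k : ℕ} (b : ℝ≥0∞) (hb : b ≤ 1) (e : Fin k → ℝ)
    (he : ∀ v, e v ∈ Icc (0:ℝ) 1) :
    ∫⁻ c, (1 - indE (vlt c e) * b) ∂cubeMeasure k = 1 - QQ e * b := by
  rw [show (fun c => (1 - indE (vlt c e) * b)) = fun c => (1 - b * indE (vlt c e)) by
    funext c; rw [mul_comm], factor_lintegral b hb e he, mul_comm]

theorem prod_swap_erase {β M : Type*} [Fintype β] [DecidableEq β] [CommMonoid M]
    (F : β → β → M) :
    ∏ j, ∏ i ∈ Finset.univ.erase j, F i j = ∏ i, ∏ j ∈ Finset.univ.erase i, F i j :=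
  Finset.prod_comm' (by intro a b; simp [Finset.mem_erase]; exact ne_comm)

theorem stable_measurableSet (n k₁ k₂ : ℕ) (σ : Equiv.Perm (Fin n)) :
    MeasurableSet {ω : PrefSpace n k₁ k₂ | weaklyStable ω σ} := by
  have hrw : {ω : PrefSpace n k₁ k₂ | weaklyStable ω σ}
      = ⋂ i, ⋂ j, {ω : PrefSpace n k₁ k₂ | j ≠ σ i →
          ¬(vlt (ω.1 i j) (ω.1 i (σ i)) ∧ vlt (ω.2 j i) (ω.2 j (σ⁻¹ j)))} := by
    ext ω
    simp only [Set.mem_setOf_eq, Set.mem_iInter]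
    rfl
  rw [hrw]
  refine MeasurableSet.iInter fun i => MeasurableSet.iInter fun j => ?_
  by_cases hji : j = σ i
  · have huniv : {ω : PrefSpace n k₁ k₂ | j ≠ σ i →
        ¬(vlt (ω.1 i j) (ω.1 i (σ i)) ∧ vlt (ω.2 j i) (ω.2 j (σ⁻¹ j)))} = Set.univ := by
      ext ω; simp [hji]
    rw [huniv]
    exact MeasurableSet.univ
  · have h2 : {ω : PrefSpace n k₁ k₂ | j ≠ σ i →
        ¬(vlt (ω.1 i j) (ω.1 i (σ i)) ∧ vlt (ω.2 j i) (ω.2 j (σ⁻¹ j)))}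
        = ({ω : PrefSpace n k₁ k₂ | vlt (ω.1 i j) (ω.1 i (σ i))}
            ∩ {ω : PrefSpace n k₁ k₂ | vlt (ω.2 j i) (ω.2 j (σ⁻¹ j))})ᶜ := by
      ext ω
      simp [hji]
    rw [h2]
    have hX : ∀ a b : Fin n, Measurable fun ω : PrefSpace n k₁ k₂ => ω.1 a b := fun a b =>
      (measurable_pi_apply b).comp ((measurable_pi_apply a).comp measurable_fst)
    have hY : ∀ a b : Fin n, Measurable fun ω : PrefSpace n k₁ k₂ => ω.2 a b := fun a b =>
      (measurable_pi_apply b).comp ((measurable_pi_apply a).comp measurable_snd)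
    refine (MeasurableSet.inter ?_ ?_).compl
    · exact ((hX i j).prodMk (hX i (σ i))) vlt_measurableSet_pair
    · exact ((hY j i).prodMk (hY j (σ⁻¹ j))) vlt_measurableSet_pair

theorem stage_y (n k₁ k₂ : ℕ) (x : Fin n → Fin n → Fin k₁ → ℝ) :
    (Measure.pi fun _ : Fin n => Measure.pi fun _ : Fin n => cubeMeasure k₂)
        (Prod.mk x ⁻¹' {ω : PrefSpace n k₁ k₂ | weaklyStable ω 1})
      = ∫⁻ e, ∏ i, ∏ j ∈ Finset.univ.erase i,
            (1 - indE (vlt (x i j) (x i i)) * QQ (e j))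
          ∂(Measure.pi fun _ : Fin n => cubeMeasure k₂) := by
  have hsecm : MeasurableSet (Prod.mk x ⁻¹' {ω : PrefSpace n k₁ k₂ | weaklyStable ω 1}) :=
    measurable_prodMk_left (stable_measurableSet n k₁ k₂ 1)
  have hsec : Prod.mk x ⁻¹' {ω : PrefSpace n k₁ k₂ | weaklyStable ω 1}
      = {y : Fin n → Fin n → Fin k₂ → ℝ |
          ∀ i j, j ≠ i → ¬(vlt (x i j) (x i i) ∧ vlt (y j i) (y j j))} := by
    ext y
    simp only [Set.mem_preimage, Set.mem_setOf_eq, weaklyStable, wBlocks, inv_one,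
      Equiv.Perm.one_apply]
  have hpoint : ∀ y : Fin n → Fin n → Fin k₂ → ℝ,
      Set.indicator (Prod.mk x ⁻¹' {ω : PrefSpace n k₁ k₂ | weaklyStable ω 1})
          (fun _ => (1:ℝ≥0∞)) y
        = ∏ j, ∏ i ∈ Finset.univ.erase j,
            (1 - indE (vlt (x i j) (x i i)) * indE (vlt (y j i) (y j j))) := by
    intro y
    have h0 : Set.indicator (Prod.mk x ⁻¹' {ω : PrefSpace n k₁ k₂ | weaklyStable ω 1})
        (fun _ => (1:ℝ≥0∞)) y
        = indE (∀ i j, j ≠ i → ¬(vlt (x i j) (x i i) ∧ vlt (y j i) (y j j))) := by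
      by_cases h : ∀ i j, j ≠ i → ¬(vlt (x i j) (x i i) ∧ vlt (y j i) (y j j))
      · have hy : y ∈ Prod.mk x ⁻¹' {ω : PrefSpace n k₁ k₂ | weaklyStable ω 1} := by
          rw [hsec]; exact h
        rw [Set.indicator_of_mem hy, indE_true h]
      · have hy : y ∉ Prod.mk x ⁻¹' {ω : PrefSpace n k₁ k₂ | weaklyStable ω 1} := by
          rw [hsec]; exact h
        rw [Set.indicator_of_notMem hy, indE_false h]
    rw [h0]
    have h1 : (∀ i j, j ≠ i → ¬(vlt (x i j) (x i i) ∧ vlt (y j i) (y j j)))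
        ↔ ∀ j ∈ Finset.univ, ∀ i ∈ Finset.univ.erase j,
            ¬(vlt (x i j) (x i i) ∧ vlt (y j i) (y j j)) := by
      constructor
      · intro h j _ i hi
        exact h i j (Finset.ne_of_mem_erase hi ∘ Eq.symm)
      · intro h i j hji
        exact h j (Finset.mem_univ j) i (Finset.mem_erase_of_ne_of_mem
          (fun hh => hji (hh ▸ rfl)) (Finset.mem_univ i))
    rw [indE_congr h1, ← prod_indE]
    refine Finset.prod_congr rfl fun j _ => ?_
    rw [← prod_indE]
    refine Finset.prod_congr rfl fun i _ => ?_
    rw [indE_not, indE_and]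
  calc (Measure.pi fun _ : Fin n => Measure.pi fun _ : Fin n => cubeMeasure k₂)
        (Prod.mk x ⁻¹' {ω : PrefSpace n k₁ k₂ | weaklyStable ω 1})
      = ∫⁻ y, Set.indicator (Prod.mk x ⁻¹' {ω : PrefSpace n k₁ k₂ | weaklyStable ω 1})
          (fun _ => (1:ℝ≥0∞)) y
          ∂(Measure.pi fun _ : Fin n => Measure.pi fun _ : Fin n => cubeMeasure k₂) := by
        rw [← lintegral_indicator_one hsecm]
        rfl
    _ = ∫⁻ y, ∏ j, ∏ i ∈ Finset.univ.erase j,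
            (1 - indE (vlt (x i j) (x i i)) * indE (vlt (y j i) (y j j)))
          ∂(Measure.pi fun _ : Fin n => Measure.pi fun _ : Fin n => cubeMeasure k₂) :=
        lintegral_congr hpoint
    _ = ∏ j, ∫⁻ row, ∏ i ∈ Finset.univ.erase j,
            (1 - indE (vlt (x i j) (x i i)) * indE (vlt (row i) (row j)))
          ∂(Measure.pi fun _ : Fin n => cubeMeasure k₂) := by
        refine lintegral_pi_prod (fun _ : Fin n => Measure.pi fun _ : Fin n => cubeMeasure k₂)
          (fun j row => ∏ i ∈ Finset.univ.erase j,
            (1 - indE (vlt (x i j) (x i i)) * indE (vlt (row i) (row j)))) fun j => ?_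
        refine Finset.measurable_prod _ fun i _ => ?_
        exact measurable_const.sub (measurable_const.mul
          (measurable_indE_vlt (measurable_pi_apply i) (measurable_pi_apply j)))
    _ = ∏ j, ∫⁻ ee, ∏ i ∈ Finset.univ.erase j,
            (1 - indE (vlt (x i j) (x i i)) * QQ ee) ∂cubeMeasure k₂ := by
        refine Finset.prod_congr rfl fun j _ => ?_
        rw [lintegral_pi_pivot (cubeMeasure k₂) j
          (fun i c d => 1 - indE (vlt (x i j) (x i i)) * indE (vlt c d)) (fun i => by
            exact measurable_const.sub (measurable_const.mul
              (measurable_indE_vlt measurable_fst measurable_snd)))]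
        refine lintegral_congr_ae ?_
        filter_upwards [cube_ae_mem k₂] with ee hee
        exact Finset.prod_congr rfl fun i _ =>
          factor_lintegral (indE (vlt (x i j) (x i i))) (indE_le_one _) ee hee
    _ = ∫⁻ e, ∏ j, ∏ i ∈ Finset.univ.erase j,
            (1 - indE (vlt (x i j) (x i i)) * QQ (e j))
          ∂(Measure.pi fun _ : Fin n => cubeMeasure k₂) := by
        refine (lintegral_pi_prod (fun _ : Fin n => cubeMeasure k₂)
          (fun j ee => ∏ i ∈ Finset.univ.erase j,
            (1 - indE (vlt (x i j) (x i i)) * QQ ee)) fun j => ?_).symm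
        refine Finset.measurable_prod _ fun i _ => ?_
        exact measurable_const.sub (measurable_const.mul measurable_QQ)
    _ = ∫⁻ e, ∏ i, ∏ j ∈ Finset.univ.erase i,
            (1 - indE (vlt (x i j) (x i i)) * QQ (e j))
          ∂(Measure.pi fun _ : Fin n => cubeMeasure k₂) :=
        lintegral_congr fun e => prod_swap_erase _

theorem stage_x (n k₁ k₂ : ℕ) (e : Fin n → Fin k₂ → ℝ) (he : ∀ j, QQ (e j) ≤ 1) :
    ∫⁻ x, ∏ i, ∏ j ∈ Finset.univ.erase i,
        (1 - indE (vlt (x i j) (x i i)) * QQ (e j))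
      ∂(Measure.pi fun _ : Fin n => Measure.pi fun _ : Fin n => cubeMeasure k₁)
    = ∫⁻ d, ∏ i, ∏ j ∈ Finset.univ.erase i, (1 - QQ (d i) * QQ (e j))
      ∂(Measure.pi fun _ : Fin n => cubeMeasure k₁) := by
  calc ∫⁻ x, ∏ i, ∏ j ∈ Finset.univ.erase i,
        (1 - indE (vlt (x i j) (x i i)) * QQ (e j))
      ∂(Measure.pi fun _ : Fin n => Measure.pi fun _ : Fin n => cubeMeasure k₁)
      = ∏ i, ∫⁻ row, ∏ j ∈ Finset.univ.erase i,
            (1 - indE (vlt (row j) (row i)) * QQ (e j))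
          ∂(Measure.pi fun _ : Fin n => cubeMeasure k₁) := by
        refine lintegral_pi_prod (fun _ : Fin n => Measure.pi fun _ : Fin n => cubeMeasure k₁)
          (fun i row => ∏ j ∈ Finset.univ.erase i,
            (1 - indE (vlt (row j) (row i)) * QQ (e j))) fun i => ?_
        refine Finset.measurable_prod _ fun j _ => ?_
        exact measurable_const.sub ((measurable_indE_vlt (measurable_pi_apply j)
          (measurable_pi_apply i)).mul measurable_const)
    _ = ∏ i, ∫⁻ d, ∏ j ∈ Finset.univ.erase i, (1 - QQ d * QQ (e j)) ∂cubeMeasure k₁ := by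
        refine Finset.prod_congr rfl fun i _ => ?_
        rw [lintegral_pi_pivot (cubeMeasure k₁) i
          (fun j c dd => 1 - indE (vlt c dd) * QQ (e j)) (fun j => by
            exact measurable_const.sub ((measurable_indE_vlt measurable_fst
              measurable_snd).mul measurable_const))]
        refine lintegral_congr_ae ?_
        filter_upwards [cube_ae_mem k₁] with dd hdd
        exact Finset.prod_congr rfl fun j _ =>
          factor_lintegral' (QQ (e j)) (he j) dd hdd
    _ = ∫⁻ d, ∏ i, ∏ j ∈ Finset.univ.erase i, (1 - QQ (d i) * QQ (e j))
          ∂(Measure.pi fun _ : Fin n => cubeMeasure k₁) := by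
        refine (lintegral_pi_prod (fun _ : Fin n => cubeMeasure k₁)
          (fun i dd => ∏ j ∈ Finset.univ.erase i, (1 - QQ dd * QQ (e j))) fun i => ?_).symm
        refine Finset.measurable_prod _ fun j _ => ?_
        exact measurable_const.sub (measurable_QQ.mul measurable_const)

theorem prob_id (n k₁ k₂ : ℕ) :
    prefMeasure n k₁ k₂ {ω | weaklyStable ω (1 : Equiv.Perm (Fin n))}
      = ∫⁻ d, ∫⁻ e, ∏ i, ∏ j ∈ Finset.univ.erase i, (1 - QQ (d i) * QQ (e j))
          ∂(Measure.pi fun _ : Fin n => cubeMeasure k₂)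
          ∂(Measure.pi fun _ : Fin n => cubeMeasure k₁) := by
  have hW : Measurable (Function.uncurry fun (x : Fin n → Fin n → Fin k₁ → ℝ)
      (e : Fin n → Fin k₂ → ℝ) => ∏ i, ∏ j ∈ Finset.univ.erase i,
        (1 - indE (vlt (x i j) (x i i)) * QQ (e j))) := by
    refine Finset.measurable_prod _ fun i _ => Finset.measurable_prod _ fun j _ => ?_
    refine measurable_const.sub (Measurable.mul ?_ ?_)
    · exact measurable_indE_vlt
        ((measurable_pi_apply j).comp ((measurable_pi_apply i).comp measurable_fst))
        ((measurable_pi_apply i).comp ((measurable_pi_apply i).comp measurable_fst))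
    · exact measurable_QQ.comp ((measurable_pi_apply j).comp measurable_snd)
  have hK : Measurable (Function.uncurry fun (e : Fin n → Fin k₂ → ℝ)
      (d : Fin n → Fin k₁ → ℝ) => ∏ i, ∏ j ∈ Finset.univ.erase i,
        (1 - QQ (d i) * QQ (e j))) := by
    refine Finset.measurable_prod _ fun i _ => Finset.measurable_prod _ fun j _ => ?_
    refine measurable_const.sub (Measurable.mul ?_ ?_)
    · exact measurable_QQ.comp ((measurable_pi_apply i).comp measurable_snd)
    · exact measurable_QQ.comp ((measurable_pi_apply j).comp measurable_fst)
  calc prefMeasure n k₁ k₂ {ω | weaklyStable ω (1 : Equiv.Perm (Fin n))}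
      = ∫⁻ x, (Measure.pi fun _ : Fin n => Measure.pi fun _ : Fin n => cubeMeasure k₂)
            (Prod.mk x ⁻¹' {ω : PrefSpace n k₁ k₂ | weaklyStable ω 1})
          ∂(Measure.pi fun _ : Fin n => Measure.pi fun _ : Fin n => cubeMeasure k₁) :=
        Measure.prod_apply (stable_measurableSet n k₁ k₂ 1)
    _ = ∫⁻ x, ∫⁻ e, ∏ i, ∏ j ∈ Finset.univ.erase i,
            (1 - indE (vlt (x i j) (x i i)) * QQ (e j))
          ∂(Measure.pi fun _ : Fin n => cubeMeasure k₂)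
          ∂(Measure.pi fun _ : Fin n => Measure.pi fun _ : Fin n => cubeMeasure k₁) :=
        lintegral_congr fun x => stage_y n k₁ k₂ x
    _ = ∫⁻ e, ∫⁻ x, ∏ i, ∏ j ∈ Finset.univ.erase i,
            (1 - indE (vlt (x i j) (x i i)) * QQ (e j))
          ∂(Measure.pi fun _ : Fin n => Measure.pi fun _ : Fin n => cubeMeasure k₁)
          ∂(Measure.pi fun _ : Fin n => cubeMeasure k₂) :=
        lintegral_lintegral_swap hW.aemeasurable
    _ = ∫⁻ e, ∫⁻ d, ∏ i, ∏ j ∈ Finset.univ.erase i, (1 - QQ (d i) * QQ (e j))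
          ∂(Measure.pi fun _ : Fin n => cubeMeasure k₁)
          ∂(Measure.pi fun _ : Fin n => cubeMeasure k₂) := by
        refine lintegral_congr_ae ?_
        filter_upwards [pi_cube_ae_mem n k₂] with e he
        exact stage_x n k₁ k₂ e (fun j => QQ_le_one (he j))
    _ = ∫⁻ d, ∫⁻ e, ∏ i, ∏ j ∈ Finset.univ.erase i, (1 - QQ (d i) * QQ (e j))
          ∂(Measure.pi fun _ : Fin n => cubeMeasure k₂)
          ∂(Measure.pi fun _ : Fin n => cubeMeasure k₁) :=
        lintegral_lintegral_swap hK.aemeasurable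

theorem measurePreserving_comp_equiv {ι : Type*} [Fintype ι] {C : Type*} [MeasurableSpace C]
    (μ : Measure C) [SigmaFinite μ] (e : ι ≃ ι) :
    MeasurePreserving (fun r : ι → C => fun i => r (e i))
      (Measure.pi fun _ : ι => μ) (Measure.pi fun _ : ι => μ) := by
  have hm : Measurable fun r : ι → C => fun i => r (e i) :=
    measurable_pi_lambda _ fun i => measurable_pi_apply (e i)
  refine ⟨hm, ?_⟩
  refine (Measure.pi_eq (μ := fun _ : ι => μ) fun s hs => ?_).symm
  rw [Measure.map_apply hm (MeasurableSet.univ_pi hs)]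
  have hpre : (fun r : ι → C => fun i => r (e i)) ⁻¹' (Set.pi Set.univ s)
      = Set.pi Set.univ (fun i => s (e.symm i)) := by
    ext r
    simp only [Set.mem_preimage, Set.mem_pi, Set.mem_univ, true_implies]
    constructor
    · intro h i; have := h (e.symm i); rwa [Equiv.apply_symm_apply] at this
    · intro h i; have := h (e i); rwa [Equiv.symm_apply_apply] at this
  rw [hpre, Measure.pi_pi]
  exact Equiv.prod_comp e.symm fun i => μ (s i)

theorem measurePreserving_pi_comp {ι : Type*} [Fintype ι] {C : Type*} [MeasurableSpace C]
    {μ : Measure C} [SigmaFinite μ] {g : C → C} (hg : MeasurePreserving g μ μ) :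
    MeasurePreserving (fun x : ι → C => fun i => g (x i))
      (Measure.pi fun _ : ι => μ) (Measure.pi fun _ : ι => μ) := by
  have hm : Measurable fun x : ι → C => fun i => g (x i) :=
    measurable_pi_lambda _ fun i => hg.measurable.comp (measurable_pi_apply i)
  refine ⟨hm, ?_⟩
  refine (Measure.pi_eq (μ := fun _ : ι => μ) fun s hs => ?_).symm
  rw [Measure.map_apply hm (MeasurableSet.univ_pi hs)]
  have hpre : (fun x : ι → C => fun i => g (x i)) ⁻¹' (Set.pi Set.univ s)
      = Set.pi Set.univ (fun i => g ⁻¹' (s i)) := by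
    ext r
    simp only [Set.mem_preimage, Set.mem_pi, Set.mem_univ, true_implies]
  rw [hpre, Measure.pi_pi]
  exact Finset.prod_congr rfl fun i _ => hg.measure_preimage (hs i).nullMeasurableSet

theorem measure_stable (n k₁ k₂ : ℕ) (σ : Equiv.Perm (Fin n)) :
    prefMeasure n k₁ k₂ {ω : PrefSpace n k₁ k₂ | weaklyStable ω σ}
      = prefMeasure n k₁ k₂ {ω : PrefSpace n k₁ k₂ | weaklyStable ω 1} := by
  have hT1 : MeasurePreserving
      (fun x : Fin n → Fin n → Fin k₁ → ℝ => fun i => fun j => x i (σ⁻¹ j))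
      (Measure.pi fun _ : Fin n => Measure.pi fun _ : Fin n => cubeMeasure k₁)
      (Measure.pi fun _ : Fin n => Measure.pi fun _ : Fin n => cubeMeasure k₁) :=
    measurePreserving_pi_comp (measurePreserving_comp_equiv (cubeMeasure k₁) (σ⁻¹ : Equiv.Perm (Fin n)))
  have hT2 : MeasurePreserving
      (fun y : Fin n → Fin n → Fin k₂ → ℝ => fun j => y (σ⁻¹ j))
      (Measure.pi fun _ : Fin n => Measure.pi fun _ : Fin n => cubeMeasure k₂)
      (Measure.pi fun _ : Fin n => Measure.pi fun _ : Fin n => cubeMeasure k₂) :=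
    measurePreserving_comp_equiv (Measure.pi fun _ : Fin n => cubeMeasure k₂)
      (σ⁻¹ : Equiv.Perm (Fin n))
  have hT : MeasurePreserving
      (Prod.map (fun x : Fin n → Fin n → Fin k₁ → ℝ => fun i => fun j => x i (σ⁻¹ j))
        (fun y : Fin n → Fin n → Fin k₂ → ℝ => fun j => y (σ⁻¹ j)))
      (prefMeasure n k₁ k₂) (prefMeasure n k₁ k₂) := hT1.prod hT2
  have hpre : (Prod.map (fun x : Fin n → Fin n → Fin k₁ → ℝ => fun i => fun j => x i (σ⁻¹ j))
        (fun y : Fin n → Fin n → Fin k₂ → ℝ => fun j => y (σ⁻¹ j)))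
      ⁻¹' {ω : PrefSpace n k₁ k₂ | weaklyStable ω σ}
      = {ω : PrefSpace n k₁ k₂ | weaklyStable ω 1} := by
    ext ω
    simp only [Set.mem_preimage, Set.mem_setOf_eq, Prod.map]
    have hw : ∀ i j, wBlocks (fun i => fun j => ω.1 i (σ⁻¹ j), fun j => ω.2 (σ⁻¹ j)) σ i j
        ↔ wBlocks ω 1 i (σ⁻¹ j) := by
      intro i j
      unfold wBlocks
      simp [Equiv.Perm.inv_def]
    constructor
    · intro h i j0 hne
      have h2 := h i (σ j0) (fun hh => hne (σ.injective hh))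
      rw [hw i (σ j0)] at h2
      simpa [Equiv.Perm.inv_def] using h2
    · intro h i j hne
      rw [hw i j]
      refine h i (σ⁻¹ j) (fun hh => hne ?_)
      rw [Equiv.Perm.one_apply] at hh
      rw [← hh]; exact (σ.apply_symm_apply j).symm
  calc prefMeasure n k₁ k₂ {ω : PrefSpace n k₁ k₂ | weaklyStable ω σ}
      = prefMeasure n k₁ k₂ ((Prod.map _ _) ⁻¹' {ω : PrefSpace n k₁ k₂ | weaklyStable ω σ}) :=
        (hT.measure_preimage (stable_measurableSet n k₁ k₂ σ).nullMeasurableSet).symm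
    _ = prefMeasure n k₁ k₂ {ω : PrefSpace n k₁ k₂ | weaklyStable ω 1} := by rw [hpre]

theorem Sw_eq_sum (n k₁ k₂ : ℕ) (ω : PrefSpace n k₁ k₂) :
    (Sw n k₁ k₂ ω : ℝ) = ∑ σ : Equiv.Perm (Fin n),
      Set.indicator {ω' : PrefSpace n k₁ k₂ | weaklyStable ω' σ} (fun _ => (1:ℝ)) ω := by
  classical
  rw [Sw, Nat.card_eq_fintype_card, Fintype.card_subtype, Finset.card_filter]
  push_cast
  refine Finset.sum_congr rfl fun σ _ => ?_
  by_cases h : weaklyStable ω σ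
  · rw [if_pos h]
    exact (Set.indicator_of_mem
      (show ω ∈ {ω' : PrefSpace n k₁ k₂ | weaklyStable ω' σ} from h) (fun _ => (1:ℝ))).symm
  · rw [if_neg h]
    exact (Set.indicator_of_notMem
      (show ω ∉ {ω' : PrefSpace n k₁ k₂ | weaklyStable ω' σ} from h) (fun _ => (1:ℝ))).symm

theorem toReal_factor {a b : ℝ} (ha : 0 ≤ a) (ha1 : a ≤ 1) (hb : 0 ≤ b) (hb1 : b ≤ 1) :
    (1 - ENNReal.ofReal a * ENNReal.ofReal b).toReal = 1 - a * b := by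
  rw [← ENNReal.ofReal_mul ha, ← ENNReal.ofReal_one,
    ← ENNReal.ofReal_sub _ (mul_nonneg ha hb)]
  rw [ENNReal.toReal_ofReal (by nlinarith)]

theorem part_one (n k₁ k₂ : ℕ) :
    (prefMeasure n k₁ k₂ {ω | weaklyStable ω (1 : Equiv.Perm (Fin n))}).toReal =
      (∫ x : Fin n → Fin k₁ → ℝ, ∫ y : Fin n → Fin k₂ → ℝ,
          ∏ i : Fin n, ∏ j ∈ Finset.univ.erase i,
            (1 - (∏ u, x i u) * ∏ v, y j v)
        ∂(Measure.pi fun _ : Fin n => cubeMeasure k₂)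
        ∂(Measure.pi fun _ : Fin n => cubeMeasure k₁)) := by
  have hK : Measurable (Function.uncurry fun (d : Fin n → Fin k₁ → ℝ)
      (e : Fin n → Fin k₂ → ℝ) =>
      ∏ i, ∏ j ∈ Finset.univ.erase i, (1 - QQ (d i) * QQ (e j))) := by
    refine Finset.measurable_prod _ fun i _ => Finset.measurable_prod _ fun j _ => ?_
    exact measurable_const.sub
      ((measurable_QQ.comp ((measurable_pi_apply i).comp measurable_fst)).mul
        (measurable_QQ.comp ((measurable_pi_apply j).comp measurable_snd)))
  have hKle : ∀ (d : Fin n → Fin k₁ → ℝ) (e : Fin n → Fin k₂ → ℝ),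
      (∏ i, ∏ j ∈ Finset.univ.erase i, (1 - QQ (d i) * QQ (e j))) ≤ 1 :=
    fun d e => Finset.prod_le_one (fun _ _ => zero_le) fun i _ =>
      Finset.prod_le_one (fun _ _ => zero_le) fun j _ => tsub_le_self
  have hH : Measurable fun d : Fin n → Fin k₁ → ℝ =>
      ∫⁻ e, ∏ i, ∏ j ∈ Finset.univ.erase i, (1 - QQ (d i) * QQ (e j))
        ∂(Measure.pi fun _ : Fin n => cubeMeasure k₂) := hK.lintegral_prod_right
  have hHle : ∀ d : Fin n → Fin k₁ → ℝ,
      (∫⁻ e, ∏ i, ∏ j ∈ Finset.univ.erase i, (1 - QQ (d i) * QQ (e j))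
        ∂(Measure.pi fun _ : Fin n => cubeMeasure k₂)) ≤ 1 := by
    intro d
    calc ∫⁻ e, ∏ i, ∏ j ∈ Finset.univ.erase i, (1 - QQ (d i) * QQ (e j))
          ∂(Measure.pi fun _ : Fin n => cubeMeasure k₂)
        ≤ ∫⁻ _, 1 ∂(Measure.pi fun _ : Fin n => cubeMeasure k₂) :=
          lintegral_mono fun e => hKle d e
      _ = 1 := by simp
  rw [prob_id n k₁ k₂]
  calc (∫⁻ d, ∫⁻ e, ∏ i, ∏ j ∈ Finset.univ.erase i, (1 - QQ (d i) * QQ (e j))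
          ∂(Measure.pi fun _ : Fin n => cubeMeasure k₂)
          ∂(Measure.pi fun _ : Fin n => cubeMeasure k₁)).toReal
      = ∫ d, (∫⁻ e, ∏ i, ∏ j ∈ Finset.univ.erase i, (1 - QQ (d i) * QQ (e j))
          ∂(Measure.pi fun _ : Fin n => cubeMeasure k₂)).toReal
          ∂(Measure.pi fun _ : Fin n => cubeMeasure k₁) :=
        (integral_toReal hH.aemeasurable
          (ae_of_all _ fun d => lt_of_le_of_lt (hHle d) ENNReal.one_lt_top)).symm
    _ = ∫ d, ∫ e, (∏ i, ∏ j ∈ Finset.univ.erase i, (1 - QQ (d i) * QQ (e j))).toReal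
          ∂(Measure.pi fun _ : Fin n => cubeMeasure k₂)
          ∂(Measure.pi fun _ : Fin n => cubeMeasure k₁) := by
        refine integral_congr_ae (Filter.Eventually.of_forall fun d => ?_)
        exact (integral_toReal (hK.comp measurable_prodMk_left).aemeasurable
          (ae_of_all _ fun e => lt_of_le_of_lt (hKle d e) ENNReal.one_lt_top)).symm
    _ = ∫ x : Fin n → Fin k₁ → ℝ, ∫ y : Fin n → Fin k₂ → ℝ,
          ∏ i : Fin n, ∏ j ∈ Finset.univ.erase i,
            (1 - (∏ u, x i u) * ∏ v, y j v)
        ∂(Measure.pi fun _ : Fin n => cubeMeasure k₂)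
        ∂(Measure.pi fun _ : Fin n => cubeMeasure k₁) := by
        refine integral_congr_ae ?_
        filter_upwards [pi_cube_ae_mem n k₁] with d hd
        refine integral_congr_ae ?_
        filter_upwards [pi_cube_ae_mem n k₂] with e he
        rw [ENNReal.toReal_prod]
        refine Finset.prod_congr rfl fun i _ => ?_
        rw [ENNReal.toReal_prod]
        refine Finset.prod_congr rfl fun j _ => ?_
        have hd1 : 0 ≤ ∏ u, d i u := Finset.prod_nonneg fun u _ => (hd i u).1
        have hd2 : (∏ u, d i u) ≤ 1 :=
          Finset.prod_le_one (fun u _ => (hd i u).1) (fun u _ => (hd i u).2)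
        have he1 : 0 ≤ ∏ v, e j v := Finset.prod_nonneg fun v _ => (he j v).1
        have he2 : (∏ v, e j v) ≤ 1 :=
          Finset.prod_le_one (fun v _ => (he j v).1) (fun v _ => (he j v).2)
        have hq1 : QQ (d i) = ENNReal.ofReal (∏ u, d i u) :=
          (ENNReal.ofReal_prod_of_nonneg (fun u _ => (hd i u).1)).symm
        have hq2 : QQ (e j) = ENNReal.ofReal (∏ v, e j v) :=
          (ENNReal.ofReal_prod_of_nonneg (fun v _ => (he j v).1)).symm
        rw [hq1, hq2]
        exact toReal_factor hd1 hd2 he1 he2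

theorem expected_weakly_stable_integral_formula' (n k₁ k₂ : ℕ) :
    ESw n k₁ k₂ = (n.factorial : ℝ) *
      (prefMeasure n k₁ k₂ {ω | weaklyStable ω (1 : Equiv.Perm (Fin n))}).toReal := by
  rw [ESw]
  calc ∫ ω, (Sw n k₁ k₂ ω : ℝ) ∂prefMeasure n k₁ k₂
      = ∫ ω, (∑ σ : Equiv.Perm (Fin n),
          Set.indicator {ω' : PrefSpace n k₁ k₂ | weaklyStable ω' σ} (fun _ => (1:ℝ)) ω)
          ∂prefMeasure n k₁ k₂ :=
        integral_congr_ae (Filter.Eventually.of_forall (Sw_eq_sum n k₁ k₂))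
    _ = ∑ σ : Equiv.Perm (Fin n), ∫ ω,
          Set.indicator {ω' : PrefSpace n k₁ k₂ | weaklyStable ω' σ} (fun _ => (1:ℝ)) ω
          ∂prefMeasure n k₁ k₂ :=
        integral_finset_sum _ fun σ _ =>
          (integrable_const (1:ℝ)).indicator (stable_measurableSet n k₁ k₂ σ)
    _ = ∑ _σ : Equiv.Perm (Fin n),
          (prefMeasure n k₁ k₂ {ω | weaklyStable ω (1 : Equiv.Perm (Fin n))}).toReal := by
        refine Finset.sum_congr rfl fun σ _ => ?_
        have h1 : ∫ ω, Set.indicator {ω' : PrefSpace n k₁ k₂ | weaklyStable ω' σ}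
            (fun _ => (1:ℝ)) ω ∂prefMeasure n k₁ k₂
            = (prefMeasure n k₁ k₂ {ω' : PrefSpace n k₁ k₂ | weaklyStable ω' σ}).toReal :=
          integral_indicator_one (stable_measurableSet n k₁ k₂ σ)
        rw [h1, measure_stable]
    _ = (n.factorial : ℝ) *
        (prefMeasure n k₁ k₂ {ω | weaklyStable ω (1 : Equiv.Perm (Fin n))}).toReal := by
        rw [Finset.sum_const, Finset.card_univ, Fintype.card_perm, Fintype.card_fin,
          nsmul_eq_mul]
/-- The probability that the identity permutation is weakly stable is given
by the integral formula, and consequently the expected number of weakly stable matchings is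
`n!` times this integral. -/
theorem expected_weakly_stable_integral_formula (n k₁ k₂ : ℕ) (hn : 2 ≤ n)
    (hk₁ : 1 ≤ k₁) (hk₂ : 1 ≤ k₂) :
    (prefMeasure n k₁ k₂ {ω | weaklyStable ω (1 : Equiv.Perm (Fin n))}).toReal =
      (∫ x : Fin n → Fin k₁ → ℝ, ∫ y : Fin n → Fin k₂ → ℝ,
          ∏ i : Fin n, ∏ j ∈ Finset.univ.erase i,
            (1 - (∏ u, x i u) * ∏ v, y j v)
        ∂(Measure.pi fun _ : Fin n => cubeMeasure k₂)
        ∂(Measure.pi fun _ : Fin n => cubeMeasure k₁)) ∧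
    ESw n k₁ k₂ = (n.factorial : ℝ) *
      ∫ x : Fin n → Fin k₁ → ℝ, ∫ y : Fin n → Fin k₂ → ℝ,
          ∏ i : Fin n, ∏ j ∈ Finset.univ.erase i,
            (1 - (∏ u, x i u) * ∏ v, y j v)
        ∂(Measure.pi fun _ : Fin n => cubeMeasure k₂)
        ∂(Measure.pi fun _ : Fin n => cubeMeasure k₁) := by
  refine ⟨part_one n k₁ k₂, ?_⟩
  rw [expected_weakly_stable_integral_formula' n k₁ k₂, part_one n k₁ k₂]
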